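/- Let I, J, K ∈ End(V) be a quaternionic triple. Consider the real subspaces of End(V): W_I = {X : XI = IX}, W_J = {X : XJ = JX}, W_K = {X : XK = KX}, and W_ℍ = {X : XI = IX and XJ = JX}. Then W_I ∩ W_J = W_I ∩ W_K = W_J ∩ W_K = W_ℍ, and any element of W_I + W_J + W_K that is the sum X + Y + Z with X ∈ W_I, Y ∈ W_J, Z ∈ W_K equal to zero must have X, Y, Z ∈ W_ℍ. (Transversality of the three centralizers modulo the quaternionic centralizer.) -/
import Mathlib

private lemma quat_aux {R : Type*} [Ring R] [Algebra ℝ R] (i j k x y z : R)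
    (hi : i * i = -1) (hj : j * j = -1)
    (hij : i * j = -(j * i)) (hk : i * j = k)
    (hx : x * i = i * x) (hy : y * j = j * y) (hz : z * k = k * z)
    (hs : x + y + z = 0) : x * j = j * x := by
  -- j*k = -(k*j)
  have hjk : j * k = -(k * j) := by
    linear_combination (norm := noncomm_ring) hij * j - j * hk - hk * j
  -- i*k = -j
  have hik : i * k = -j := by
    linear_combination (norm := noncomm_ring) -(i * hk) + hi * j
  -- (x+y) commutes with k
  have hw : (x + y) * k = k * (x + y) := by
    linear_combination (norm := noncomm_ring) hs * k - k * hs - hz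
  -- Q := x*j - j*x anticommutes with i
  have hQi : (x * j - j * x) * i = -(i * (x * j - j * x)) := by
    linear_combination (norm := noncomm_ring) -(j * hx) - hij * x + x * hij - hx * j
  -- Q anticommutes with k
  have hQk : (x * j - j * x) * k = -(k * (x * j - j * x)) := by
    have h1 : ((x + y) * j - j * (x + y)) * k = -(k * ((x + y) * j - j * (x + y))) := by
      linear_combination (norm := noncomm_ring)
        (x + y) * hjk - hw * j - hjk * (x + y) - j * hw
    linear_combination (norm := noncomm_ring) h1 - hy * k - k * hy
  -- hence Q commutes with j
  have hQj : (x * j - j * x) * j = j * (x * j - j * x) := by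
    linear_combination (norm := noncomm_ring)
      (x * j - j * x) * hik - hik * (x * j - j * x) - hQi * k + i * hQk
  -- so 2 • (j*x*j + x) = 0
  have ha : (j * x * j + x) + (j * x * j + x) = 0 := by
    linear_combination (norm := noncomm_ring) -hQj + x * hj + hj * x
  have ha2 : (2 : ℝ) • (j * x * j + x) = 0 := by rw [two_smul]; exact ha
  have hjxj : j * x * j + x = 0 := by
    have h := congrArg (fun t => (2 : ℝ)⁻¹ • t) ha2
    simpa [smul_smul] using h
  linear_combination (norm := noncomm_ring) hj * (x * j) - j * hjxj

theorem stmt_8 (V : Type*) [AddCommGroup V] [Module ℝ V]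
    (I J K : Module.End ℝ V) (hI : I * I = -1) (hJ : J * J = -1) (hK : K * K = -1)
    (hIJ : I * J = -(J * I)) (hIJK : I * J = K)
    (WI WJ WK WH : Set (Module.End ℝ V))
    (hWI : WI = {X | X * I = I * X}) (hWJ : WJ = {X | X * J = J * X})
    (hWK : WK = {X | X * K = K * X})
    (hWH : WH = {X | X * I = I * X ∧ X * J = J * X}) :
    WI ∩ WJ = WH ∧ WI ∩ WK = WH ∧ WJ ∩ WK = WH ∧
      ∀ X Y Z : Module.End ℝ V, X ∈ WI → Y ∈ WJ → Z ∈ WK → X + Y + Z = 0 →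
        X ∈ WH ∧ Y ∈ WH ∧ Z ∈ WH := by
  subst hWI hWJ hWK hWH
  have hik : I * K = -J := by
    linear_combination (norm := noncomm_ring) -(I * hIJK) + hI * J
  have hjk : J * K = I := by
    linear_combination (norm := noncomm_ring) -(J * hIJK) + hIJ * J - I * hJ
  -- commuting with I and K implies commuting with J
  have cIK : ∀ X : Module.End ℝ V, X * I = I * X → X * K = K * X → X * J = J * X := by
    intro X hxi hxk
    linear_combination (norm := noncomm_ring) X * hik - hik * X - hxi * K - I * hxk
  -- commuting with I and J implies commuting with K
  have cIJ : ∀ X : Module.End ℝ V, X * I = I * X → X * J = J * X → X * K = K * X := by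
    intro X hxi hxj
    linear_combination (norm := noncomm_ring) -(X * hIJK) + hIJK * X + hxi * J + I * hxj
  -- commuting with J and K implies commuting with I
  have cJK : ∀ X : Module.End ℝ V, X * J = J * X → X * K = K * X → X * I = I * X := by
    intro X hxj hxk
    linear_combination (norm := noncomm_ring) -(X * hjk) + hjk * X + hxj * K + J * hxk
  refine ⟨rfl, ?_, ?_, ?_⟩
  · ext X
    simp only [Set.mem_inter_iff, Set.mem_setOf_eq]
    exact ⟨fun ⟨h1, h2⟩ => ⟨h1, cIK X h1 h2⟩, fun ⟨h1, h2⟩ => ⟨h1, cIJ X h1 h2⟩⟩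
  · ext X
    simp only [Set.mem_inter_iff, Set.mem_setOf_eq]
    exact ⟨fun ⟨h1, h2⟩ => ⟨cJK X h1 h2, h1⟩, fun ⟨h1, h2⟩ => ⟨h2, cIJ X h1 h2⟩⟩
  · intro X Y Z hx hy hz hs
    simp only [Set.mem_setOf_eq] at hx hy hz ⊢
    have hXJ : X * J = J * X := quat_aux I J K X Y Z hI hJ hIJ hIJK hx hy hz hs
    have hYI : Y * I = I * Y := by
      refine quat_aux J I (-K) Y X Z hJ hI ?_ ?_ hy hx ?_ ?_
      · linear_combination (norm := noncomm_ring) hIJ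
      · linear_combination (norm := noncomm_ring) hIJ - hIJK
      · linear_combination (norm := noncomm_ring) -hz
      · linear_combination (norm := noncomm_ring) hs
    have hZI : Z * I = I * Z := by
      linear_combination (norm := noncomm_ring) hs * I - I * hs - hx - hYI
    have hZJ : Z * J = J * Z := by
      linear_combination (norm := noncomm_ring) hs * J - J * hs - hXJ - hy
    exact ⟨⟨hx, hXJ⟩, ⟨hYI, hy⟩, ⟨hZI, hZJ⟩⟩
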